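/- arXiv:1602.01675 — 2 statements merged into one kernel-verified Lean document; each statement's English description precedes it below -/
import Mathlib

section
/- For all real parameters α, β, the coefficient functions Ā(τ,σ) = α + (β − √3/6)·P_1(σ) + β·P_1(τ), B̄(τ) = 1 − τ, B̂(τ) = 1, C(τ) = τ (for τ, σ ∈ [0,1]) satisfy the symplectic conditions: (i) B̂(τ)(1 − C(τ)) = B̄(τ) for all τ ∈ [0,1]; (ii) B̂(τ)(B̄(σ) − Ā(τ,σ)) = B̂(σ)(B̄(τ) − Ā(σ,τ)) for all τ, σ ∈ [0,1]. -/
/-- The `n`-th normalized shifted Legendre polynomial on `[0,1]`, via Rodrigues' formula.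
For `n = 0` this formula gives the constant `1`. -/
noncomputable def legP (n : ℕ) (x : ℝ) : ℝ :=
  Real.sqrt (2 * n + 1) / n.factorial *
    iteratedDeriv n (fun t : ℝ => t ^ n * (t - 1) ^ n) x

lemma legP_one (x : ℝ) : legP 1 x = Real.sqrt 3 * (2 * x - 1) := by
  have h : (fun t : ℝ => t ^ 1 * (t - 1) ^ 1) = fun t : ℝ => t * t - t := by
    funext t; ring
  have hd : deriv (fun t : ℝ => t * t - t) x = 2 * x - 1 := by
    have : HasDerivAt (fun t : ℝ => t * t - t) (2 * x - 1) x := by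
      have := ((hasDerivAt_id x).mul (hasDerivAt_id x)).sub (hasDerivAt_id x)
      simpa [two_mul, Pi.mul_def, Pi.sub_def] using this
    simpa using this.deriv
  simp [legP, h, iteratedDeriv_one, hd]
  ring

/-- The two-parameter family
`Ā(τ,σ) = α + (β − √3/6)P₁(σ) + βP₁(τ)`, `B̄(τ) = 1 − τ`, `B̂ = 1`, `C(τ) = τ`
satisfies the symplectic conditions. -/
theorem order2_family_symplectic
    (α β : ℝ) (A : ℝ → ℝ → ℝ)
    (hA : ∀ τ σ : ℝ, A τ σ = α + (β - Real.sqrt 3 / 6) * legP 1 σ + β * legP 1 τ)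
    (Bbar Bhat C : ℝ → ℝ)
    (hBbar : ∀ τ, Bbar τ = 1 - τ) (hBhat : ∀ τ, Bhat τ = 1) (hC : ∀ τ, C τ = τ) :
    (∀ τ ∈ Set.Icc (0:ℝ) 1, Bhat τ * (1 - C τ) = Bbar τ) ∧
    (∀ τ ∈ Set.Icc (0:ℝ) 1, ∀ σ ∈ Set.Icc (0:ℝ) 1,
      Bhat τ * (Bbar σ - A τ σ) = Bhat σ * (Bbar τ - A σ τ)) := by
  have h3 : Real.sqrt 3 * Real.sqrt 3 = 3 :=
    Real.mul_self_sqrt (by norm_num)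
  refine ⟨fun τ _ => by simp [hBhat, hC, hBbar], fun τ _ σ _ => ?_⟩
  rw [hA, hA, hBhat, hBhat, hBbar, hBbar, legP_one, legP_one]
  linear_combination ((σ - τ)/3) * h3
end

section
/- Let α : ℕ × ℕ → ℝ be finitely supported with α(0,0) = 1/6, α(1,0) = √3/12, and α(2,0) = √5/60, and define Ā(τ,σ) = Σ_{i,j} α(i,j)·P_i(τ)·P_j(σ). If ∫₀¹ ∫₀¹ ∫₀¹ Ā(τ,σ)·Ā(τ,ρ) dρ dσ dτ = 1/20, then α(i,0) = 0 for all i > 2. -/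
open intervalIntegral

open Polynomial

noncomputable def legF (n : ℕ) : ℝ[X] := X ^ n * (X - 1) ^ n
noncomputable def legQ (n : ℕ) : ℝ[X] := derivative^[n] (legF n)

lemma legF_monic (n : ℕ) : (legF n).Monic := by
  have := (monic_X_pow (R := ℝ) n).mul ((monic_X_sub_C (1:ℝ)).pow n)
  simpa [legF, Polynomial.C_1] using this

lemma legF_ne_zero (n : ℕ) : legF n ≠ 0 := (legF_monic n).ne_zero

lemma legF_natDegree (n : ℕ) : (legF n).natDegree = 2 * n := by
  have h : (X - 1 : ℝ[X]) = X - C 1 := by simp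
  rw [legF, natDegree_mul (pow_ne_zero _ X_ne_zero) (pow_ne_zero _ (by rw [h]; exact X_sub_C_ne_zero 1)),
    natDegree_pow, natDegree_pow, natDegree_X, h, natDegree_X_sub_C]
  ring

lemma legF_boundary (n j : ℕ) (hj : j < n) :
    (derivative^[j] (legF n)).eval 0 = 0 ∧ (derivative^[j] (legF n)).eval 1 = 0 := by
  constructor
  · apply isRoot_iterate_derivative_of_lt_rootMultiplicity
    refine lt_of_lt_of_le hj ?_
    rw [le_rootMultiplicity_iff (legF_ne_zero n)]
    have : (X - C (0:ℝ)) ^ n = X ^ n := by simp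
    rw [this]; exact ⟨(X-1)^n, rfl⟩
  · apply isRoot_iterate_derivative_of_lt_rootMultiplicity
    refine lt_of_lt_of_le hj ?_
    rw [le_rootMultiplicity_iff (legF_ne_zero n)]
    exact ⟨X ^ n, by rw [C_1, legF]; ring⟩

lemma legQ_natDegree_le (n : ℕ) : (legQ n).natDegree ≤ n := by
  have := natDegree_iterate_derivative (legF n) n
  rwa [legF_natDegree, two_mul, Nat.add_sub_cancel] at this

lemma iterate_derivative_legF_self (n : ℕ) :
    derivative^[2 * n] (legF n) = C ((2 * n).factorial : ℝ) := by
  have hd : (derivative^[2 * n] (legF n)).natDegree = 0 := by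
    have := natDegree_iterate_derivative (legF n) (2 * n)
    rw [legF_natDegree] at this; omega
  have := Polynomial.eq_C_of_natDegree_eq_zero hd
  rw [this, coeff_iterate_derivative, zero_add]
  have hc : (legF n).coeff (2 * n) = 1 := by
    have := (legF_monic n).leadingCoeff
    rwa [Polynomial.leadingCoeff, legF_natDegree] at this
  rw [hc, Nat.descFactorial_self, nsmul_eq_mul, mul_one]

lemma poly_intervalIntegrable (p : ℝ[X]) (a b : ℝ) :
    IntervalIntegrable (fun x => p.eval x) MeasureTheory.volume a b :=
  (p.continuous).intervalIntegrable a b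

lemma poly_int_parts (p q : ℝ[X]) :
    ∫ x in (0:ℝ)..1, q.eval x * (derivative p).eval x
      = q.eval 1 * p.eval 1 - q.eval 0 * p.eval 0
        - ∫ x in (0:ℝ)..1, (derivative q).eval x * p.eval x := by
  exact integral_mul_deriv_eq_deriv_mul (fun x _ => q.hasDerivAt x)
    (fun x _ => p.hasDerivAt x) (poly_intervalIntegrable _ _ _) (poly_intervalIntegrable _ _ _)

lemma poly_iter_parts (p : ℝ[X]) (n : ℕ)
    (hp : ∀ j < n, (derivative^[j] p).eval 0 = 0 ∧ (derivative^[j] p).eval 1 = 0) :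
    ∀ q : ℝ[X], ∫ x in (0:ℝ)..1, q.eval x * (derivative^[n] p).eval x
      = (-1) ^ n * ∫ x in (0:ℝ)..1, (derivative^[n] q).eval x * p.eval x := by
  induction n with
  | zero => simp
  | succ n ih =>
    intro q
    rw [Function.iterate_succ_apply', poly_int_parts]
    have h0 := (hp n (Nat.lt_succ_self n)).1
    have h1 := (hp n (Nat.lt_succ_self n)).2
    rw [h0, h1, mul_zero, mul_zero, sub_zero, zero_sub,
      ih (fun j hj => hp j (hj.trans (Nat.lt_succ_self n))) (derivative q),
      ← Function.iterate_succ_apply]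
    ring

lemma beta_nat (b a : ℕ) : (∫ x in (0:ℝ)..1, x ^ a * (1 - x) ^ b)
    = (a.factorial * b.factorial : ℝ) / (a + b + 1).factorial := by
  induction b generalizing a with
  | zero =>
    simp only [pow_zero, mul_one, integral_pow, one_pow, Nat.factorial_zero]
    rw [Nat.add_zero, Nat.factorial_succ]
    push_cast
    rw [zero_pow (by omega), sub_zero]
    field_simp
  | succ b ih =>
    have hu : ∀ x ∈ Set.uIcc (0:ℝ) 1, HasDerivAt (fun x : ℝ => (1 - x) ^ (b + 1))
        (-(((b:ℝ)+1) * (1 - x) ^ b)) x := by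
      intro x _
      have h := ((hasDerivAt_id x).const_sub 1).pow (b + 1)
      refine h.congr_deriv ?_
      simp only [id]
      push_cast; ring
    have hv : ∀ x ∈ Set.uIcc (0:ℝ) 1, HasDerivAt (fun x : ℝ => x ^ (a + 1))
        (((a:ℝ) + 1) * x ^ a) x := by
      intro x _
      have h := hasDerivAt_pow (a + 1) x
      refine h.congr_deriv ?_
      push_cast; ring
    have key := integral_mul_deriv_eq_deriv_mul hu hv
      ((continuous_const.mul ((continuous_const.sub continuous_id).pow b)).neg.intervalIntegrable 0 1)
      ((continuous_const.mul (continuous_pow a)).intervalIntegrable 0 1)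
    have l1 : (∫ x in (0:ℝ)..1, (1 - x) ^ (b+1) * (((a:ℝ)+1) * x ^ a))
        = ((a:ℝ)+1) * ∫ x in (0:ℝ)..1, x ^ a * (1 - x) ^ (b+1) := by
      rw [← integral_const_mul]
      congr 1; funext x; ring
    have l2 : (∫ x in (0:ℝ)..1, (-(((b:ℝ)+1) * (1 - x) ^ b)) * x ^ (a+1))
        = -(((b:ℝ)+1) * ∫ x in (0:ℝ)..1, x ^ (a+1) * (1 - x) ^ b) := by
      rw [← integral_const_mul, ← integral_neg]
      congr 1; funext x; ring
    rw [l1, l2] at key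
    have key2 : ((a:ℝ)+1) * (∫ x in (0:ℝ)..1, x ^ a * (1 - x) ^ (b+1))
        = ((b:ℝ)+1) * ∫ x in (0:ℝ)..1, x ^ (a+1) * (1 - x) ^ b := by
      rw [key]
      simp [zero_pow (Nat.succ_ne_zero a), zero_pow (Nat.succ_ne_zero b)]
    rw [ih (a+1), show a+1+b+1 = a+(b+1)+1 by omega] at key2
    have ha : ((a:ℝ)+1) ≠ 0 := by positivity
    have hden : (((a+(b+1)+1).factorial : ℝ)) ≠ 0 :=
      (Nat.cast_pos.mpr (Nat.factorial_pos _)).ne'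
    rw [eq_div_iff hden]
    field_simp at key2
    apply mul_left_cancel₀ ha
    push_cast [Nat.factorial_succ] at key2 ⊢
    linear_combination key2

lemma legQ_diag (n : ℕ) : (∫ x in (0:ℝ)..1, (legQ n).eval x * (legQ n).eval x)
    = ((2*n).factorial * (n.factorial * n.factorial) : ℝ) / (2*n+1).factorial := by
  have h := poly_iter_parts (legF n) n (fun j hj => legF_boundary n j hj) (legQ n)
  rw [show (derivative^[n] (legF n)) = legQ n from rfl] at h
  have h2 : derivative^[n] (legQ n) = C ((2*n).factorial : ℝ) := by
    rw [legQ, ← Function.iterate_add_apply, show n + n = 2 * n by ring,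
      iterate_derivative_legF_self]
  rw [h2] at h
  have h3 : (∫ x in (0:ℝ)..1, (C ((2*n).factorial : ℝ)).eval x * (legF n).eval x)
      = ((2*n).factorial : ℝ) * ((-1:ℝ))^n * ((n.factorial * n.factorial : ℝ) / (2*n+1).factorial) := by
    have : ∀ x : ℝ, (C ((2*n).factorial : ℝ)).eval x * (legF n).eval x
        = ((2*n).factorial : ℝ) * (-1:ℝ)^n * (x ^ n * (1 - x) ^ n) := by
      intro x
      simp only [eval_C, legF, eval_mul, eval_pow, eval_sub, eval_X, eval_one]
      rw [show (x - 1) = -1 * (1 - x) by ring, mul_pow]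
      ring
    rw [intervalIntegral.integral_congr (fun x _ => this x), integral_const_mul, beta_nat]
    rw [show n + n + 1 = 2*n+1 by ring]
  rw [h3] at h
  rw [h]
  rw [show ((-1:ℝ))^n * ((2*n).factorial * (-1:ℝ)^n * (((n.factorial:ℝ) * n.factorial) / (2*n+1).factorial))
      = (-1:ℝ)^n * (-1:ℝ)^n * ((2*n).factorial * (((n.factorial:ℝ) * n.factorial) / (2*n+1).factorial)) by ring,
    ← pow_add, ← two_mul, pow_mul]
  norm_num
  ring

lemma legQ_offdiag {i k : ℕ} (h : i < k) :
    (∫ x in (0:ℝ)..1, (legQ i).eval x * (legQ k).eval x) = 0 := by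
  have hp := poly_iter_parts (legF k) k (fun j hj => legF_boundary k j hj) (legQ i)
  rw [show (derivative^[k] (legF k)) = legQ k from rfl] at hp
  have h2 : derivative^[k] (legQ i) = 0 :=
    iterate_derivative_eq_zero (lt_of_le_of_lt (legQ_natDegree_le i) h)
  rw [h2] at hp
  simpa using hp

lemma iteratedDeriv_poly (n : ℕ) (p : ℝ[X]) :
    iteratedDeriv n (fun x => p.eval x) = fun x => (derivative^[n] p).eval x := by
  induction n with
  | zero => simp
  | succ n ih =>
    rw [iteratedDeriv_succ, ih, Function.iterate_succ_apply']
    funext x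
    exact Polynomial.deriv _

lemma legP_eq (n : ℕ) (x : ℝ) :
    legP n x = Real.sqrt (2 * n + 1) / n.factorial * (legQ n).eval x := by
  rw [legP, legQ]
  congr 1
  have : (fun t : ℝ => t ^ n * (t - 1) ^ n) = fun t => (legF n).eval t := by
    funext t; simp [legF]
  rw [this, iteratedDeriv_poly]

lemma legP_continuous (n : ℕ) : Continuous (legP n) := by
  have : legP n = fun x => Real.sqrt (2 * n + 1) / n.factorial * (legQ n).eval x := by
    funext x; exact legP_eq n x
  rw [this]
  exact continuous_const.mul (legQ n).continuous

lemma legP_orthonormal (i k : ℕ) :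
    (∫ x in (0:ℝ)..1, legP i x * legP k x) = if i = k then 1 else 0 := by
  have hrw : ∀ x : ℝ, legP i x * legP k x
      = (Real.sqrt (2*i+1) / i.factorial * (Real.sqrt (2*k+1) / k.factorial))
        * ((legQ i).eval x * (legQ k).eval x) := by
    intro x; rw [legP_eq, legP_eq]; ring
  rw [intervalIntegral.integral_congr (fun x _ => hrw x), integral_const_mul]
  by_cases h : i = k
  · subst h
    rw [legQ_diag, if_pos rfl]
    have hs : Real.sqrt (2*i+1) * Real.sqrt (2*i+1) = (2*(i:ℝ)+1) := by
      exact Real.mul_self_sqrt (by positivity)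
    have hfac : ((2*i+1).factorial : ℝ) = (2*(i:ℝ)+1) * ((2*i).factorial : ℝ) := by
      rw [Nat.factorial_succ]; push_cast; ring
    have h1 : ((i.factorial : ℝ)) ≠ 0 := (Nat.cast_pos.mpr (Nat.factorial_pos _)).ne'
    have h2 : (((2*i).factorial : ℝ)) ≠ 0 := (Nat.cast_pos.mpr (Nat.factorial_pos _)).ne'
    have h3 : (2*(i:ℝ)+1) ≠ 0 := by positivity
    field_simp [hfac]
    nlinarith [hs]
  · rw [if_neg h]
    rcases Nat.lt_or_ge i k with hik | hik
    · rw [legQ_offdiag hik]; ring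
    · have hki : k < i := lt_of_le_of_ne hik (fun e => h e.symm)
      have := legQ_offdiag hki
      rw [intervalIntegral.integral_congr (fun x _ => mul_comm ((legQ i).eval x) ((legQ k).eval x)), this]
      ring

lemma legP_zero (x : ℝ) : legP 0 x = 1 := by
  simp [legP]

lemma integral_legP (j : ℕ) : (∫ x in (0:ℝ)..1, legP j x) = if j = 0 then 1 else 0 := by
  have h := legP_orthonormal j 0
  rw [intervalIntegral.integral_congr (g := fun x => legP j x)
    (fun x _ => by simp [legP_zero])] at h
  exact h
set_option maxHeartbeats 2000000 in
/-- For a Legendre expansion with `α(0,0) = 1/6`, `α(1,0) = √3/12`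
and `α(2,0) = √5/60`, the fifth-order condition
`∫₀¹∫₀¹∫₀¹ Ā(τ,σ)Ā(τ,ρ) dρ dσ dτ = 1/20` forces `α(i,0) = 0` for all `i > 2`. -/
theorem order5_condition_ten
    (α : (ℕ × ℕ) →₀ ℝ)
    (h0 : α (0, 0) = 1 / 6) (h1 : α (1, 0) = Real.sqrt 3 / 12)
    (h2 : α (2, 0) = Real.sqrt 5 / 60)
    (A : ℝ → ℝ → ℝ)
    (hA : ∀ τ σ : ℝ, A τ σ = α.sum fun p c => c * legP p.1 τ * legP p.2 σ)
    (hint : (∫ τ in (0:ℝ)..1, ∫ σ in (0:ℝ)..1, ∫ ρ in (0:ℝ)..1, A τ σ * A τ ρ) = 1 / 20) :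
    ∀ i : ℕ, 2 < i → α (i, 0) = 0 := by
  classical
  intro i hi
  set S : Finset (ℕ × ℕ) := α.support.filter (fun p => p.2 = 0) with hS
  set T : Finset ℕ := S.image Prod.fst with hT
  set g : ℝ → ℝ := fun τ => ∑ n ∈ T, α (n, 0) * legP n τ with hg
  have hA' : ∀ τ σ : ℝ, A τ σ = ∑ p ∈ α.support, α p * legP p.1 τ * legP p.2 σ := by
    intro τ σ; rw [hA]; rfl
  have hintA : ∀ τ : ℝ, (∫ σ in (0:ℝ)..1, A τ σ) = g τ := by
    intro τ
    rw [intervalIntegral.integral_congr (fun σ _ => hA' τ σ),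
      intervalIntegral.integral_finset_sum (f := fun p σ => α p * legP p.1 τ * legP p.2 σ)
        (fun p _ => (continuous_const.mul (legP_continuous p.2)).intervalIntegrable 0 1)]
    have hterm : ∀ p ∈ α.support, (∫ σ in (0:ℝ)..1, α p * legP p.1 τ * legP p.2 σ)
        = if p.2 = 0 then α p * legP p.1 τ else 0 := by
      intro p _
      rw [intervalIntegral.integral_const_mul, integral_legP]
      simp [mul_ite]
    rw [Finset.sum_congr rfl hterm, ← Finset.sum_filter, ← hS]
    simp only [hg]
    have hinj : ∀ x ∈ S, ∀ y ∈ S, x.1 = y.1 → x = y := by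
      intro x hx y hy hxy
      have hx2 : x.2 = 0 := (Finset.mem_filter.mp hx).2
      have hy2 : y.2 = 0 := (Finset.mem_filter.mp hy).2
      exact Prod.ext hxy (hx2.trans hy2.symm)
    rw [hT, Finset.sum_image (g := Prod.fst) (f := fun n => α (n, 0) * legP n τ) hinj]
    apply Finset.sum_congr rfl
    intro p hp
    have hp2 : p.2 = 0 := (Finset.mem_filter.mp hp).2
    rw [show ((p.1 : ℕ), (0 : ℕ)) = p from Prod.ext rfl hp2.symm]
  have hBB : ∀ τ : ℝ, (∫ σ in (0:ℝ)..1, ∫ ρ in (0:ℝ)..1, A τ σ * A τ ρ) = g τ * g τ := by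
    intro τ
    have h1 : ∀ σ : ℝ, (∫ ρ in (0:ℝ)..1, A τ σ * A τ ρ) = A τ σ * g τ := by
      intro σ; rw [intervalIntegral.integral_const_mul, hintA]
    rw [intervalIntegral.integral_congr (fun σ _ => h1 σ),
      intervalIntegral.integral_mul_const, hintA]
  rw [intervalIntegral.integral_congr (fun τ _ => hBB τ)] at hint
  have hgg : (∫ τ in (0:ℝ)..1, g τ * g τ) = ∑ n ∈ T, (α (n, 0)) ^ 2 := by
    have hexp : ∀ τ : ℝ, g τ * g τ
        = ∑ n ∈ T, ∑ m ∈ T, (α (n, 0) * α (m, 0)) * (legP n τ * legP m τ) := by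
      intro τ
      rw [hg, Finset.sum_mul_sum]
      exact Finset.sum_congr rfl fun n _ => Finset.sum_congr rfl fun m _ => by ring
    rw [intervalIntegral.integral_congr (fun τ _ => hexp τ),
      intervalIntegral.integral_finset_sum
        (f := fun n τ => ∑ m ∈ T, (α (n, 0) * α (m, 0)) * (legP n τ * legP m τ))
        (fun n _ =>
        (continuous_finset_sum _ (fun m _ =>
          continuous_const.mul ((legP_continuous n).mul (legP_continuous m)))).intervalIntegrable 0 1)]
    apply Finset.sum_congr rfl
    intro n hn
    rw [intervalIntegral.integral_finset_sum
      (f := fun m τ => (α (n, 0) * α (m, 0)) * (legP n τ * legP m τ))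
      (fun m _ =>
      (continuous_const.mul ((legP_continuous n).mul (legP_continuous m))).intervalIntegrable 0 1)]
    have hterm : ∀ m ∈ T, (∫ τ in (0:ℝ)..1, (α (n, 0) * α (m, 0)) * (legP n τ * legP m τ))
        = if n = m then α (n, 0) * α (m, 0) else 0 := by
      intro m _
      rw [intervalIntegral.integral_const_mul, legP_orthonormal]
      simp [mul_ite]
    rw [Finset.sum_congr rfl hterm, Finset.sum_ite_eq T n (fun m => α (n, 0) * α (m, 0)),
      if_pos hn]
    ring
  rw [hgg] at hint
  have hmemT : ∀ k : ℕ, α (k, 0) ≠ 0 → k ∈ T := by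
    intro k hk
    exact Finset.mem_image.mpr ⟨(k, 0),
      Finset.mem_filter.mpr ⟨Finsupp.mem_support_iff.mpr hk, rfl⟩, rfl⟩
  have hsub : ({0, 1, 2} : Finset ℕ) ⊆ T := by
    intro n hn
    simp only [Finset.mem_insert, Finset.mem_singleton] at hn
    rcases hn with rfl | rfl | rfl
    · exact hmemT 0 (by rw [h0]; norm_num)
    · exact hmemT 1 (by rw [h1]; positivity)
    · exact hmemT 2 (by rw [h2]; positivity)
  have h012 : ∑ n ∈ ({0, 1, 2} : Finset ℕ), (α (n, 0)) ^ 2 = 1 / 20 := by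
    rw [Finset.sum_insert (by norm_num), Finset.sum_insert (by norm_num),
      Finset.sum_singleton, h0, h1, h2]
    have s3 : Real.sqrt 3 ^ 2 = 3 := Real.sq_sqrt (by norm_num)
    have s5 : Real.sqrt 5 ^ 2 = 5 := Real.sq_sqrt (by norm_num)
    rw [div_pow, div_pow, div_pow, s3, s5]
    norm_num
  have hsdiff := Finset.sum_sdiff (f := fun n => (α (n, 0)) ^ 2) hsub
  have hrest : ∑ n ∈ T \ ({0, 1, 2} : Finset ℕ), (α (n, 0)) ^ 2 = 0 := by
    rw [hint] at hsdiff
    linarith [h012, hsdiff]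
  by_cases hmem : α (i, 0) = 0
  · exact hmem
  · have hiT : i ∈ T := hmemT i hmem
    have hi' : i ∈ T \ ({0, 1, 2} : Finset ℕ) :=
      Finset.mem_sdiff.mpr ⟨hiT, by simp only [Finset.mem_insert, Finset.mem_singleton]; omega⟩
    have hz := (Finset.sum_eq_zero_iff_of_nonneg (fun n _ => sq_nonneg _)).mp hrest i hi'
    exact pow_eq_zero_iff (two_ne_zero) |>.mp hz
end
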